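/- Define f(y) = -(3/2)y - (1/8)y³ + (1/8)√(272y² + 40y⁴ + y⁶ + 256) for 0 < y < √2. Then f''(y) > 0 on (0, √2). -/

import Mathlib

open Real

private lemma gpos (z : ℝ) : 0 < 272*z^2 + 40*z^4 + z^6 + 256 := by positivity

private lemma hasDerivAt_g (z : ℝ) :
    HasDerivAt (fun w : ℝ => 272*w^2 + 40*w^4 + w^6 + 256) (544*z + 160*z^3 + 6*z^5) z := by
  have h : HasDerivAt (fun w : ℝ => 272*w^2 + 40*w^4 + w^6 + 256)
      (272*(↑2*z^(2-1)) + 40*(↑4*z^(4-1)) + ↑6*z^(6-1) + 0) z :=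
    ((((hasDerivAt_pow 2 z).const_mul 272).add ((hasDerivAt_pow 4 z).const_mul 40)).add
      (hasDerivAt_pow 6 z)).add (hasDerivAt_const z 256)
  convert h using 1
  push_cast
  ring

private lemma hasDerivAt_f (z : ℝ) :
    HasDerivAt (fun w : ℝ => -(3/2)*w - (1/8)*w^3 + (1/8)*Real.sqrt (272*w^2 + 40*w^4 + w^6 + 256))
      (-(3/2) - (3/8)*z^2 + (1/8)*((544*z + 160*z^3 + 6*z^5) /
        (2*Real.sqrt (272*z^2 + 40*z^4 + z^6 + 256)))) z := by
  have h1 : HasDerivAt (fun w : ℝ => Real.sqrt (272*w^2 + 40*w^4 + w^6 + 256))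
      ((544*z + 160*z^3 + 6*z^5) / (2*Real.sqrt (272*z^2 + 40*z^4 + z^6 + 256))) z :=
    (hasDerivAt_g z).sqrt (gpos z).ne'
  have h2 := (((hasDerivAt_id z).const_mul (-(3/2))).sub
      ((hasDerivAt_pow 3 z).const_mul (1/8))).add (h1.const_mul (1/8))
  convert h2 using 1
  any_goals rfl
  push_cast
  ring

theorem f_second_deriv_pos (y : ℝ) (h0 : 0 < y) (h2 : y < Real.sqrt 2) :
    0 < deriv (deriv (fun y : ℝ =>
      -(3/2)*y - (1/8)*y^3 + (1/8)*Real.sqrt (272*y^2 + 40*y^4 + y^6 + 256))) y := by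
  have hy2 : y^2 < 2 := (Real.lt_sqrt h0.le).mp h2
  have hg := gpos y
  set s : ℝ := Real.sqrt (272*y^2 + 40*y^4 + y^6 + 256) with hs_def
  have hs : 0 < s := Real.sqrt_pos.mpr hg
  have hs2 : s^2 = 272*y^2 + 40*y^4 + y^6 + 256 := Real.sq_sqrt hg.le
  have hd1 : deriv (fun w : ℝ =>
      -(3/2)*w - (1/8)*w^3 + (1/8)*Real.sqrt (272*w^2 + 40*w^4 + w^6 + 256))
      = fun z => -(3/2) - (3/8)*z^2 + (1/8)*((544*z + 160*z^3 + 6*z^5) /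
        (2*Real.sqrt (272*z^2 + 40*z^4 + z^6 + 256))) :=
    funext fun z => (hasDerivAt_f z).deriv
  rw [hd1]
  -- second derivative
  have hden : HasDerivAt (fun z : ℝ => 2*Real.sqrt (272*z^2 + 40*z^4 + z^6 + 256))
      (2*((544*y + 160*y^3 + 6*y^5) / (2*s))) y :=
    (((hasDerivAt_g y).sqrt hg.ne').const_mul 2)
  have hnum : HasDerivAt (fun z : ℝ => 544*z + 160*z^3 + 6*z^5)
      (544 + 480*y^2 + 30*y^4) y := by
    have h := (((hasDerivAt_id y).const_mul 544).add
        (((hasDerivAt_pow 3 y).const_mul 160).add ((hasDerivAt_pow 5 y).const_mul 6)))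
    convert h using 1
    any_goals rfl
    · funext x; simp only [id_eq, Pi.add_apply]; ring
    · push_cast; ring
  have hdivne : (2:ℝ)*s ≠ 0 := by positivity
  have hdiv := hnum.div hden (by rw [← hs_def]; exact hdivne)
  have hfull := ((hasDerivAt_const y (-(3/2):ℝ)).sub
      ((hasDerivAt_pow 2 y).const_mul (3/8))).add (hdiv.const_mul (1/8))
  have hfull' : HasDerivAt (fun z : ℝ => -(3/2) - (3/8)*z^2 + (1/8)*((544*z + 160*z^3 + 6*z^5) /
        (2*Real.sqrt (272*z^2 + 40*z^4 + z^6 + 256))))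
      (((2*(544 + 480*y^2 + 30*y^4)*s^2 - (544*y + 160*y^3 + 6*y^5)^2) - 24*y*s^2*s)
        / (32*s^3)) y := by
    convert hfull using 1
    any_goals rfl
    rw [← hs_def]
    field_simp
    ring
  rw [hfull'.deriv]
  apply div_pos
  · have hnum_eq : 2*(544 + 480*y^2 + 30*y^4)*s^2 - (544*y + 160*y^3 + 6*y^5)^2
        = 24*y^10 + 1440*y^8 + 23680*y^6 + 145920*y^4 + 245760*y^2 + 278528 := by
      linear_combination (2*(544 + 480*y^2 + 30*y^4))*hs2
    rw [hnum_eq]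
    have hPpos : (0:ℝ) < 24*y^10 + 1440*y^8 + 23680*y^6 + 145920*y^4 + 245760*y^2 + 278528 := by
      positivity
    have hsq : (24*y*s^2*s)^2
        < (24*y^10 + 1440*y^8 + 23680*y^6 + 145920*y^4 + 245760*y^2 + 278528)^2 := by
      have hss : (24*y*s^2*s)^2 = 576*y^2*(272*y^2 + 40*y^4 + y^6 + 256)^3 := by
        have h : s^2*(s^2*s^2) = (272*y^2 + 40*y^4 + y^6 + 256)^3 := by
          rw [hs2]; ring
        linear_combination (576*y^2) * h
      rw [hss]
      nlinarith [mul_nonneg (pow_nonneg h0.le 14) (by nlinarith : (0:ℝ) ≤ 12 - y^2),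
        pow_nonneg h0.le 2, pow_nonneg h0.le 4, pow_nonneg h0.le 6, pow_nonneg h0.le 8,
        pow_nonneg h0.le 10, pow_nonneg h0.le 12]
    nlinarith [mul_nonneg (mul_nonneg (mul_nonneg (by norm_num : (0:ℝ) ≤ 24) h0.le)
      (sq_nonneg s)) hs.le, hPpos, hsq]
  · positivity
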